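/- Every subsequence (n_k) of ℕ admits a further subsequence (n_{k_j}) such that, almost surely, σ_∞ = lim_{r→∞} liminf_{j→∞} ρ_{n_{k_j}}^{(r)}. -/

import Mathlib

open MeasureTheory Filter Set

namespace Stmt6Aux

/-- The set whose infimum defines the stopping time. -/
def Sset (f : ℝ → E) [Norm E] (σ0 T r : ℝ) : Set ℝ :=
  {t : ℝ | t ∈ Set.Ioo 0 σ0 ∧ r < ‖f t‖} ∪ {T}

variable {E : Type*} [NormedAddCommGroup E]

lemma Sset_nonempty (f : ℝ → E) (σ0 T r : ℝ) : (Sset f σ0 T r).Nonempty :=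
  ⟨T, Or.inr rfl⟩

lemma Sset_bddBelow (f : ℝ → E) {σ0 T : ℝ} (r : ℝ) (hT : 0 < T) :
    BddBelow (Sset f σ0 T r) := by
  refine ⟨0, fun t ht => ?_⟩
  rcases ht with ht | ht
  · exact ht.1.1.le
  · simp only [Set.mem_singleton_iff] at ht; exact ht ▸ hT.le

lemma sInf_Sset_nonneg (f : ℝ → E) {σ0 T : ℝ} (r : ℝ) (hT : 0 < T) :
    0 ≤ sInf (Sset f σ0 T r) := by
  refine le_csInf (Sset_nonempty f σ0 T r) fun t ht => ?_
  rcases ht with ht | ht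
  · exact ht.1.1.le
  · simp only [Set.mem_singleton_iff] at ht; exact ht ▸ hT.le

lemma sInf_Sset_le_T (f : ℝ → E) {σ0 T : ℝ} (r : ℝ) (hT : 0 < T) :
    sInf (Sset f σ0 T r) ≤ T :=
  csInf_le (Sset_bddBelow f r hT) (Or.inr rfl)

lemma sInf_Sset_mono (f : ℝ → E) {σ0 T r r' : ℝ} (hT : 0 < T) (h : r ≤ r') :
    sInf (Sset f σ0 T r) ≤ sInf (Sset f σ0 T r') := by
  refine csInf_le_csInf (Sset_bddBelow f r hT) (Sset_nonempty f σ0 T r') ?_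
  rintro t (ht | ht)
  · exact Or.inl ⟨ht.1, lt_of_le_of_lt h ht.2⟩
  · exact Or.inr ht

/-- If the path explodes at `σ0 < T`, the stopping time is `< σ0`. -/
lemma sInf_Sset_lt_sigma (f : ℝ → E) {σ0 T r : ℝ} (hσ0 : 0 < σ0) (hT : 0 < T)
    (hexp : ∃ᶠ t in nhdsWithin σ0 (Set.Iio σ0), r < ‖f t‖) :
    sInf (Sset f σ0 T r) < σ0 := by
  have hmem : Set.Ioo 0 σ0 ∈ nhdsWithin σ0 (Set.Iio σ0) :=
    Ioo_mem_nhdsLT hσ0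
  obtain ⟨t, ht, hmt⟩ := (hexp.and_eventually (eventually_of_mem hmem fun t h => h)).exists
  have : t ∈ Sset f σ0 T r := Or.inl ⟨hmt, ht⟩
  calc sInf (Sset f σ0 T r) ≤ t := csInf_le (Sset_bddBelow f r hT) this
    _ < σ0 := hmt.2


/-- If `f` is bounded by `C` on `[0, s']` and `C < L`, the level-`L` stopping time is `≥ s'`. -/
lemma aux_rho_ge (f : ℝ → E) {σ0 T s' C L : ℝ} (hσT : σ0 ≤ T) (hs' : s' < σ0)
    (hC : ∀ t ∈ Set.Icc 0 s', ‖f t‖ ≤ C) (hL : C < L) :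
    s' ≤ sInf (Sset f σ0 T L) := by
  refine le_csInf (Sset_nonempty f σ0 T L) fun b hb => ?_
  rcases hb with hb | hb
  · by_contra hlt
    push_neg at hlt
    exact absurd (hC b ⟨hb.1.1.le, hlt.le⟩) (not_le.mpr (hL.trans hb.2))
  · simp only [Set.mem_singleton_iff] at hb
    exact hb ▸ (hs'.le.trans hσT)

/-- Upper bound lemma: if the level-`L` truncation of `X_m` has norm `> r` at `t0 < σl`,
then the level-`r` stopping time of `X_m` is `≤ t0`. -/
lemma aux_upper (fm gm : ℝ → E) {σm T t0 r L : ℝ}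
    (hσm : σm ∈ Set.Ioc 0 T)
    (hexpm : σm < T → ∀ M : ℝ, ∃ᶠ t in nhdsWithin σm (Set.Iio σm), M < ‖fm t‖)
    (ht0 : 0 < t0) (ht0T : t0 < T)
    (hrL : r ≤ L)
    (hgm : ∀ t ∈ Set.Icc 0 (sInf (Sset fm σm T L)), gm t = fm t)
    (hnorm : r < ‖gm t0‖) :
    sInf (Sset fm σm T r) ≤ t0 := by
  have hT : 0 < T := ht0.trans ht0T
  by_contra hlt
  push_neg at hlt
  -- first, t0 < σm
  have hσgt : t0 < σm := by
    by_contra hσle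
    push_neg at hσle
    have hσmT : σm < T := lt_of_le_of_lt hσle ht0T
    exact absurd (sInf_Sset_lt_sigma fm hσm.1 hT (hexpm hσmT r)) (not_lt.mpr (hσle.trans hlt.le))
  have hmono : sInf (Sset fm σm T r) ≤ sInf (Sset fm σm T L) := sInf_Sset_mono fm hT hrL
  have ht0mem : t0 ∈ Set.Icc 0 (sInf (Sset fm σm T L)) :=
    ⟨ht0.le, (hlt.trans_le hmono).le⟩
  have : t0 ∈ Sset fm σm T r := Or.inl ⟨⟨ht0, hσgt⟩, by rw [← hgm t0 ht0mem]; exact hnorm⟩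
  exact absurd (csInf_le (Sset_bddBelow fm r hT) this) (not_le.mpr hlt)

/-- Lower bound lemma. -/
lemma aux_lower (fm fi gm gi : ℝ → E) {σm σl T s' C L : ℝ}
    (hσm : σm ∈ Set.Ioc 0 T) (hσl : σl ∈ Set.Ioc 0 T)
    (hfmc : ContinuousOn fm (Set.Ico 0 σm))
    (hexpm : σm < T → ∀ M : ℝ, ∃ᶠ t in nhdsWithin σm (Set.Iio σm), M < ‖fm t‖)
    (hs'σ : s' < σl)
    (hC : ∀ t ∈ Set.Icc 0 s', ‖fi t‖ ≤ C)
    (hL : C + 2 ≤ L)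
    (hgm : ∀ t ∈ Set.Icc 0 (sInf (Sset fm σm T L)), gm t = fm t)
    (hgi : ∀ t ∈ Set.Icc 0 (sInf (Sset fi σl T L)), gi t = fi t)
    (hclose : ∀ t ∈ Set.Icc 0 T, ‖gm t - gi t‖ ≤ 1) :
    s' ≤ sInf (Sset fm σm T L) := by
  have hT : 0 < T := hσl.1.trans_le hσl.2
  set ρ := sInf (Sset fm σm T L) with hρdef
  by_contra hlt
  push_neg at hlt
  have hρ0 : 0 ≤ ρ := sInf_Sset_nonneg fm L hT
  have hρT : ρ < T := hlt.trans (hs'σ.trans_le hσl.2)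
  -- ρ < σm
  have hρσm : ρ < σm := by
    rcases eq_or_lt_of_le hσm.2 with heq | hσmT
    · exact heq ▸ hρT
    · by_contra hge
      push_neg at hge
      exact absurd (sInf_Sset_lt_sigma fm hσm.1 hT (hexpm hσmT L)) (not_lt.mpr hge)
  -- continuity of fm at ρ within Ico 0 σm
  have hcont : ContinuousWithinAt fm (Set.Ico 0 σm) ρ := hfmc ρ ⟨hρ0, hρσm⟩
  rw [Metric.continuousWithinAt_iff] at hcont
  obtain ⟨δ, hδ0, hδ⟩ := hcont 1 one_pos
  -- find an element of the set close to ρ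
  set η := min δ (min (σm - ρ) (T - ρ)) with hηdef
  have hη0 : 0 < η := lt_min hδ0 (lt_min (sub_pos.mpr hρσm) (sub_pos.mpr hρT))
  obtain ⟨t, htS, htlt⟩ : ∃ t ∈ Sset fm σm T L, t < ρ + η := by
    by_contra hno
    push_neg at hno
    have : ρ + η ≤ ρ := le_csInf (Sset_nonempty fm σm T L) hno
    linarith
  have htρ : ρ ≤ t := csInf_le (Sset_bddBelow fm L hT) htS
  have htT : t < T := by
    have : η ≤ T - ρ := le_trans (min_le_right _ _) (min_le_right _ _)
    linarith
  have htS' : t ∈ Set.Ioo 0 σm ∧ L < ‖fm t‖ := by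
    rcases htS with h | h
    · exact h
    · simp only [Set.mem_singleton_iff] at h; exact absurd (h ▸ htT) (lt_irrefl T)
  -- ‖fm ρ‖ > L - 1
  have hdist : dist (fm t) (fm ρ) < 1 := by
    refine hδ ⟨htS'.1.1.le, htS'.1.2⟩ ?_
    rw [Real.dist_eq, abs_of_nonneg (by linarith)]
    have : η ≤ δ := min_le_left _ _
    linarith
  have hfmρ : L - 1 < ‖fm ρ‖ := by
    have := norm_sub_norm_le (fm t) (fm ρ)
    rw [← dist_eq_norm] at this
    linarith [htS'.2]
  -- identify with g's
  have hρl : s' ≤ sInf (Sset fi σl T L) :=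
    aux_rho_ge fi hσl.2 hs'σ hC (by linarith)
  have h1 : gm ρ = fm ρ := hgm ρ ⟨hρ0, le_refl _⟩
  have h2 : gi ρ = fi ρ := hgi ρ ⟨hρ0, hlt.le.trans hρl⟩
  have h3 : ‖fi ρ‖ ≤ C := hC ρ ⟨hρ0, hlt.le⟩
  have h4 : ‖gm ρ - gi ρ‖ ≤ 1 := hclose ρ ⟨hρ0, hρT.le⟩
  rw [h1, h2] at h4
  have := norm_sub_norm_le (fm ρ) (fi ρ)
  linarith


/-- Pointwise bound by the sup over `[0,T]`. -/
lemma norm_le_iSup (f g : ℝ → E) (hf : Continuous f) (hg : Continuous g) {T t : ℝ}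
    (ht : t ∈ Set.Icc 0 T) :
    ‖f t - g t‖ ≤ ⨆ s : Set.Icc (0:ℝ) T, ‖f (s : ℝ) - g (s : ℝ)‖ := by
  have hcont : Continuous fun s : Set.Icc (0:ℝ) T => ‖f (s : ℝ) - g (s : ℝ)‖ :=
    ((hf.sub hg).norm).comp continuous_subtype_val
  exact le_ciSup (isCompact_range hcont).bddAbove (⟨t, ht⟩ : Set.Icc (0:ℝ) T)

end Stmt6Aux


open Stmt6Aux Topology in
theorem stmt_6
    {Ω : Type*} [MeasurableSpace Ω] (P : Measure Ω) [IsProbabilityMeasure P]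
    {E : Type*} [NormedAddCommGroup E] [NormedSpace ℝ E] [CompleteSpace E]
    [MeasurableSpace E] [BorelSpace E]
    (T : ℝ) (hT : 0 < T)
    -- the explosion times σ_n (n ∈ ℕ) and σ_∞
    (σ : ℕ → Ω → ℝ) (σi : Ω → ℝ)
    (hσmeas : ∀ n, Measurable (σ n)) (hσimeas : Measurable σi)
    (hσmem : ∀ n ω, σ n ω ∈ Set.Ioc 0 T) (hσimem : ∀ ω, σi ω ∈ Set.Ioc 0 T)
    -- the processes X_n (n ∈ ℕ) and X_∞, jointly measurable
    (X : ℕ → ℝ → Ω → E) (Xi : ℝ → Ω → E)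
    (hXmeas : ∀ n, Measurable fun p : ℝ × Ω => X n p.1 p.2)
    (hXimeas : Measurable fun p : ℝ × Ω => Xi p.1 p.2)
    -- path continuity on [0, σ_n(ω)), and on [0,T] if σ_n(ω) = T
    (hXcont : ∀ n ω, ContinuousOn (fun t => X n t ω) (Set.Ico 0 (σ n ω)))
    (hXcontT : ∀ n ω, σ n ω = T → ContinuousOn (fun t => X n t ω) (Set.Icc 0 T))
    (hXicont : ∀ ω, ContinuousOn (fun t => Xi t ω) (Set.Ico 0 (σi ω)))
    (hXicontT : ∀ ω, σi ω = T → ContinuousOn (fun t => Xi t ω) (Set.Icc 0 T))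
    -- σ_n is an explosion time: on {σ_n < T}, limsup_{t ↑ σ_n} ‖X_n(t)‖ = ∞
    (hexpl : ∀ n ω, σ n ω < T →
      ∀ M : ℝ, ∃ᶠ t in nhdsWithin (σ n ω) (Set.Iio (σ n ω)), M < ‖X n t ω‖)
    (hexpli : ∀ ω, σi ω < T →
      ∀ M : ℝ, ∃ᶠ t in nhdsWithin (σi ω) (Set.Iio (σi ω)), M < ‖Xi t ω‖)
    -- the stopping times ρ_n^{(r)} = inf { t ∈ (0, σ_n) : ‖X_n(t)‖ > r }, inf ∅ := T
    (ρ : ℕ → ℝ → Ω → ℝ) (ρi : ℝ → Ω → ℝ)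
    (hρ : ∀ n r ω, ρ n r ω = sInf ({t : ℝ | t ∈ Set.Ioo 0 (σ n ω) ∧ r < ‖X n t ω‖} ∪ {T}))
    (hρi : ∀ r ω, ρi r ω = sInf ({t : ℝ | t ∈ Set.Ioo 0 (σi ω) ∧ r < ‖Xi t ω‖} ∪ {T}))
    -- the globally defined processes X_n^{(r)} (denoted Y n r) and X_∞^{(r)} (denoted Yi r)
    (Y : ℕ → ℝ → ℝ → Ω → E) (Yi : ℝ → ℝ → Ω → E)
    (hYmeas : ∀ n r, Measurable fun p : ℝ × Ω => Y n r p.1 p.2)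
    (hYimeas : ∀ r, Measurable fun p : ℝ × Ω => Yi r p.1 p.2)
    (hYcont : ∀ n r ω, Continuous fun t => Y n r t ω)
    (hYicont : ∀ r ω, Continuous fun t => Yi r t ω)
    -- assumption (a)
    (ha : ∀ n r, 0 < r → ∀ᵐ ω ∂P, ∀ t ∈ Set.Icc 0 (ρ n r ω), Y n r t ω = X n t ω)
    (hai : ∀ r, 0 < r → ∀ᵐ ω ∂P, ∀ t ∈ Set.Icc 0 (ρi r ω), Yi r t ω = Xi t ω)
    -- assumption (b): X_n^{(r)} → X_∞^{(r)} in L⁰(Ω; C([0,T]; E))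
    (hb : ∀ r, 0 < r → TendstoInMeasure P
      (fun n ω => ⨆ t : Set.Icc (0:ℝ) T, ‖Y n r (t : ℝ) ω - Yi r (t : ℝ) ω‖)
      atTop (fun _ => (0 : ℝ)))    :
    ∀ n : ℕ → ℕ, StrictMono n → ∃ k : ℕ → ℕ, StrictMono k ∧ ∀ᵐ ω ∂P,
      Tendsto (fun r : ℝ => liminf (fun j => ρ (n (k j)) r ω) atTop) atTop (nhds (σi ω)) := by
  intro n hn
  set L : ℕ → ℝ := fun R => (R : ℝ) + 1 with hLdef
  have hL0 : ∀ R : ℕ, 0 < L R := fun R => by positivity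
  set D : ℕ → ℕ → Ω → ℝ :=
    fun R m ω => ⨆ t : Set.Icc (0:ℝ) T, ‖Y m (L R) (t : ℝ) ω - Yi (L R) (t : ℝ) ω‖ with hDdef
  -- convergence in measure along the subsequence n
  have hbn : ∀ R : ℕ, TendstoInMeasure P (fun j ω => D R (n j) ω) atTop (fun _ => (0:ℝ)) :=
    fun R => tendstoInMeasure_iff_dist.mpr fun ε hε =>
      (tendstoInMeasure_iff_dist.mp (hb (L R) (hL0 R)) ε hε).comp hn.tendsto_atTop
  -- extraction of the diagonal subsequence
  have hEv : ∀ j : ℕ, ∀ᶠ m in atTop, ∀ R ∈ Set.Iic j,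
      P {ω | (1/2 : ℝ) ^ j ≤ dist (D R (n m) ω) 0} ≤ ENNReal.ofReal ((1/2 : ℝ) ^ j) := by
    intro j
    rw [eventually_all_finite (Set.finite_Iic j)]
    intro R _
    have h := tendstoInMeasure_iff_dist.mp (hbn R) ((1/2 : ℝ) ^ j) (by positivity)
    exact (h.eventually_lt_const (ENNReal.ofReal_pos.mpr (by positivity))).mono
      fun m hm => hm.le
  obtain ⟨k, hk, hkP⟩ := extraction_forall_of_eventually hEv
  refine ⟨k, hk, ?_⟩
  -- Borel–Cantelli
  set s : ℕ → Set Ω := fun j =>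
    ⋃ R ∈ Finset.range (j+1), {ω | (1/2 : ℝ) ^ j ≤ dist (D R (n (k j)) ω) 0} with hsdef
  have hμs : ∀ j, P (s j) ≤ ENNReal.ofReal (((j:ℝ)+1) * (1/2 : ℝ) ^ j) := by
    intro j
    calc P (s j) ≤ ∑ R ∈ Finset.range (j+1),
          P {ω | (1/2 : ℝ) ^ j ≤ dist (D R (n (k j)) ω) 0} := measure_biUnion_finset_le _ _
      _ ≤ ∑ R ∈ Finset.range (j+1), ENNReal.ofReal ((1/2 : ℝ) ^ j) :=
          Finset.sum_le_sum fun R hR => hkP j R (Set.mem_Iic.mpr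
            (Nat.lt_succ_iff.mp (Finset.mem_range.mp hR)))
      _ = ENNReal.ofReal (((j:ℝ)+1) * (1/2 : ℝ) ^ j) := by
          rw [Finset.sum_const, Finset.card_range, ENNReal.ofReal_mul (by positivity)]
          rw [nsmul_eq_mul]
          congr 1
          rw [← ENNReal.ofReal_natCast]
          norm_num
  have hsummable : Summable (fun j : ℕ => ((j:ℝ)+1) * (1/2 : ℝ) ^ j) := by
    have h1 : Summable (fun j : ℕ => (j:ℝ) * (1/2 : ℝ) ^ j) := by
      simpa using summable_pow_mul_geometric_of_norm_lt_one 1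
        (show ‖(1/2 : ℝ)‖ < 1 by rw [Real.norm_eq_abs, abs_lt]; constructor <;> norm_num)
    have h2 : Summable (fun j : ℕ => (1/2 : ℝ) ^ j) :=
      summable_geometric_of_lt_one (by norm_num) (by norm_num)
    have := h1.add h2
    convert this using 2 with j
    ring
  have hsum : ∑' j, P (s j) ≠ ⊤ := by
    refine ne_top_of_le_ne_top ?_ (ENNReal.tsum_le_tsum hμs)
    rw [← ENNReal.ofReal_tsum_of_nonneg (fun j => by positivity) hsummable]
    exact ENNReal.ofReal_ne_top
  have hBC : P (limsup s atTop) = 0 := measure_limsup_atTop_eq_zero hsum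
  -- the almost sure event
  have hae1 : ∀ᵐ ω ∂P, ∀ m R : ℕ, ∀ t ∈ Set.Icc 0 (ρ m (L R) ω), Y m (L R) t ω = X m t ω :=
    ae_all_iff.mpr fun m => ae_all_iff.mpr fun R => ha m (L R) (hL0 R)
  have hae2 : ∀ᵐ ω ∂P, ∀ R : ℕ, ∀ t ∈ Set.Icc 0 (ρi (L R) ω), Yi (L R) t ω = Xi t ω :=
    ae_all_iff.mpr fun R => hai (L R) (hL0 R)
  have hae3 : ∀ᵐ ω ∂P, ω ∉ limsup s atTop := measure_eq_zero_iff_ae_notMem.mp hBC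
  filter_upwards [hae1, hae2, hae3] with ω hident hidenti hnotlim
  -- abbreviations for this ω
  have hρ' : ∀ m r, ρ m r ω = sInf (Sset (fun t => X m t ω) (σ m ω) T r) :=
    fun m r => hρ m r ω
  have hρi' : ∀ r, ρi r ω = sInf (Sset (fun t => Xi t ω) (σi ω) T r) :=
    fun r => hρi r ω
  have hρnonneg : ∀ m r, 0 ≤ ρ m r ω := fun m r => by
    rw [hρ']; exact sInf_Sset_nonneg _ _ hT
  have hρleT : ∀ m r, ρ m r ω ≤ T := fun m r => by
    rw [hρ']; exact sInf_Sset_le_T _ _ hT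
  -- a.e. convergence of the sups along the diagonal subsequence
  have hDconv : ∀ R : ℕ, Tendsto (fun j => D R (n (k j)) ω) atTop (𝓝 0) := by
    intro R
    rw [mem_limsup_iff_frequently_mem, not_frequently] at hnotlim
    rw [tendsto_iff_dist_tendsto_zero]
    have hsq : ∀ᶠ j in atTop, dist (D R (n (k j)) ω) 0 ≤ (1/2 : ℝ) ^ j := by
      filter_upwards [hnotlim, eventually_ge_atTop R] with j hj hjR
      simp only [hsdef, Set.mem_iUnion, not_exists, Set.mem_setOf_eq] at hj
      exact (not_le.mp (hj R (Finset.mem_range.mpr (Nat.lt_succ_of_le hjR)))).le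
    exact squeeze_zero' (Eventually.of_forall fun j => dist_nonneg) hsq
      (tendsto_pow_atTop_nhds_zero_of_lt_one (by norm_num) (by norm_num))
  -- boundedness facts for liminf manipulation
  have hbddge : ∀ r : ℝ, IsBoundedUnder (· ≥ ·) atTop (fun j => ρ (n (k j)) r ω) :=
    fun r => isBoundedUnder_of ⟨0, fun j => hρnonneg (n (k j)) r⟩
  have hbddle : ∀ r : ℝ, IsBoundedUnder (· ≤ ·) atTop (fun j => ρ (n (k j)) r ω) :=
    fun r => isBoundedUnder_of ⟨T, fun j => hρleT (n (k j)) r⟩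
  set F : ℝ → ℝ := fun r => liminf (fun j => ρ (n (k j)) r ω) atTop with hFdef
  -- monotonicity of F
  have hFmono : Monotone F := by
    intro r r' hrr'
    refine liminf_le_liminf (Eventually.of_forall fun j => ?_) (hbddge r)
      ((hbddle r').isCoboundedUnder_ge)
    rw [hρ', hρ']
    exact sInf_Sset_mono _ hT hrr'
  -- upper bound : F r ≤ σi ω for every r
  have hFle : ∀ r : ℝ, F r ≤ σi ω := by
    intro r
    rcases eq_or_lt_of_le (hσimem ω).2 with heq | hlt
    · rw [heq]
      exact liminf_le_of_frequently_le
        (Frequently.of_forall fun j => hρleT (n (k j)) r) (hbddge r)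
    · -- choose t0 close to σi ω where ‖Xi t0 ω‖ > r
      have hmem : Set.Ioo 0 (σi ω) ∈ nhdsWithin (σi ω) (Set.Iio (σi ω)) :=
        Ioo_mem_nhdsLT (hσimem ω).1
      obtain ⟨t0, ht0n, ht0m⟩ :=
        ((hexpli ω hlt r).and_eventually (eventually_of_mem hmem fun t h => h)).exists
      have ht0T : t0 < T := ht0m.2.trans_le (hσimem ω).2
      -- a bound for Xi on [0, t0]
      have hsub : Set.Icc 0 t0 ⊆ Set.Ico 0 (σi ω) :=
        fun t h => ⟨h.1, lt_of_le_of_lt h.2 ht0m.2⟩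
      obtain ⟨C, hC⟩ := isCompact_Icc.exists_bound_of_continuousOn ((hXicont ω).mono hsub)
      obtain ⟨R, hR⟩ := exists_nat_gt (max C r)
      have hCL : C < L R := lt_of_le_of_lt (le_max_left C r) (hR.trans (by simp [hLdef]))
      have hrL : r < L R := lt_of_le_of_lt (le_max_right C r) (hR.trans (by simp [hLdef]))
      -- Yi agrees with Xi at t0
      have hρiL : t0 ≤ ρi (L R) ω := by
        rw [hρi']
        exact aux_rho_ge _ (hσimem ω).2 ht0m.2 hC hCL
      have hYieq : Yi (L R) t0 ω = Xi t0 ω := hidenti R t0 ⟨ht0m.1.le, hρiL⟩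
      -- eventually the approximating processes are large at t0
      have hev : ∀ᶠ j in atTop, ρ (n (k j)) r ω ≤ t0 := by
        filter_upwards [(hDconv R).eventually_lt_const (show (0:ℝ) < ‖Xi t0 ω‖ - r by
          linarith)] with j hj
        have hpt : ‖Y (n (k j)) (L R) t0 ω - Yi (L R) t0 ω‖ ≤ D R (n (k j)) ω :=
          norm_le_iSup _ _ (hYcont _ _ ω) (hYicont _ ω) ⟨ht0m.1.le, ht0T.le⟩
        have hnorm : r < ‖Y (n (k j)) (L R) t0 ω‖ := by
          have h1 := norm_sub_norm_le (Yi (L R) t0 ω) (Y (n (k j)) (L R) t0 ω)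
          rw [hYieq] at h1
          rw [norm_sub_rev, hYieq] at hpt
          linarith
        rw [hρ']
        refine aux_upper _ (fun t => Y (n (k j)) (L R) t ω) (hσmem _ ω) (hexpl _ ω)
          ht0m.1 ht0T hrL.le ?_ hnorm
        intro t ht
        rw [← hρ'] at ht
        exact hident (n (k j)) R t ht
      exact (liminf_le_of_frequently_le hev.frequently (hbddge r)).trans ht0m.2.le
  -- lower bound : for every ε > 0 there is a level beyond which F ≥ σi ω - ε
  have hFge : ∀ ε : ℝ, 0 < ε → ∃ R : ℕ, σi ω - ε ≤ F (L R) := by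
    intro ε hε
    rcases le_or_gt (σi ω - ε) 0 with h0 | h0
    · refine ⟨0, h0.trans ?_⟩
      exact le_liminf_of_le ((hbddle (L 0)).isCoboundedUnder_ge)
        (Eventually.of_forall fun j => hρnonneg (n (k j)) (L 0))
    · set s' : ℝ := σi ω - ε / 2 with hs'def
      have hs'pos : 0 < s' := by simp only [hs'def]; linarith
      have hs'lt : s' < σi ω := by simp only [hs'def]; linarith
      have hsub : Set.Icc 0 s' ⊆ Set.Ico 0 (σi ω) :=
        fun t h => ⟨h.1, lt_of_le_of_lt h.2 hs'lt⟩
      obtain ⟨C, hC⟩ := isCompact_Icc.exists_bound_of_continuousOn ((hXicont ω).mono hsub)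
      obtain ⟨R, hR⟩ := exists_nat_gt (C + 1)
      have hCL : C + 2 ≤ L R := by
        have : (R : ℝ) + 1 ≥ C + 2 := by linarith
        simpa [hLdef] using this
      refine ⟨R, ?_⟩
      have hev : ∀ᶠ j in atTop, s' ≤ ρ (n (k j)) (L R) ω := by
        filter_upwards [(hDconv R).eventually_lt_const one_pos] with j hj
        rw [hρ']
        refine aux_lower (fun t => X (n (k j)) t ω) (fun t => Xi t ω)
          (fun t => Y (n (k j)) (L R) t ω) (fun t => Yi (L R) t ω)
          (hσmem _ ω) (hσimem ω) (hXcont _ ω) (hexpl _ ω) hs'lt hC hCL ?_ ?_ ?_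
        · intro t ht
          rw [← hρ'] at ht
          exact hident (n (k j)) R t ht
        · intro t ht
          rw [← hρi'] at ht
          exact hidenti R t ht
        · intro t ht
          exact (norm_le_iSup _ _ (hYcont _ _ ω) (hYicont _ ω) ht).trans hj.le
      have hlast : s' ≤ F (L R) :=
        le_liminf_of_le ((hbddle (L R)).isCoboundedUnder_ge) hev
      rw [hs'def] at hlast
      linarith
  -- conclude the convergence
  rw [show nhds (σi ω) = 𝓝 (σi ω) from rfl]
  refine tendsto_order.2 ⟨?_, ?_⟩
  · intro a ha'
    obtain ⟨R, hR⟩ := hFge ((σi ω - a) / 2) (by linarith)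
    filter_upwards [eventually_ge_atTop (L R)] with r hr
    have : F (L R) ≤ F r := hFmono hr
    have : a < F r := by
      have h1 : σi ω - (σi ω - a) / 2 = (σi ω + a) / 2 := by ring
      nlinarith [hR, this]
    exact this
  · intro a ha'
    exact Eventually.of_forall fun r => (hFle r).trans_lt ha'
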